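/- Let m₁, m₂ ∈ ℝ and σ > 0, and let N(m,σ²) denote the Gaussian probability measure on ℝ with mean m and variance σ². Then TV(N(m₁,σ²), N(m₂,σ²)) ≤ |m₁ − m₂| / (σ·√(2π)). Consequently, if X is a normed space and μ : X → ℝ is L-Lipschitz, then for all x, x′ ∈ X, TV(N(μ(x),σ²), N(μ(x′),σ²)) ≤ L·‖x − x′‖ / (σ·√2), i.e. a Gaussian policy with Lipschitz mean map is total-variation continuous with a linear modulus. -/

import Mathlib

open MeasureTheory ProbabilityTheory
open scoped ENNReal NNReal
open Real Set

/-- Total variation distance between two measures. -/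
noncomputable def tvDist {𝒳 : Type*} [MeasurableSpace 𝒳] (P Q : Measure 𝒳) : ℝ :=
  ⨆ A : {s : Set 𝒳 // MeasurableSet s}, |(P A.1).toReal - (Q A.1).toReal|


private lemma gauss_tail (σ : ℝ) (hσ : 0 < σ) (m₁ m₂ : ℝ) (h : m₂ ≤ m₁) :
    (gaussianReal m₁ ⟨σ ^ 2, sq_nonneg σ⟩ (Ici ((m₁ + m₂) / 2))).toReal
      - (gaussianReal m₂ ⟨σ ^ 2, sq_nonneg σ⟩ (Ici ((m₁ + m₂) / 2))).toReal
      ≤ (m₁ - m₂) / (σ * Real.sqrt (2 * Real.pi)) := by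
  set v : ℝ≥0 := ⟨σ ^ 2, sq_nonneg σ⟩ with hv
  have hv0 : v ≠ 0 := by
    intro h0
    have h2 : σ ^ 2 = 0 := congrArg NNReal.toReal h0
    exact (pow_ne_zero 2 hσ.ne') h2
  set c : ℝ := (m₁ + m₂) / 2 with hc
  have hmap : ∀ m : ℝ, gaussianReal m v (Ici c) = gaussianReal 0 v (Ici (c - m)) := by
    intro m
    have hmm := gaussianReal_map_add_const (μ := 0) (v := v) m
    rw [zero_add] at hmm
    rw [← hmm, Measure.map_apply (measurable_add_const m) measurableSet_Ici]
    congr 1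
    ext x
    simp [le_sub_iff_add_le]
  rw [hmap, hmap]
  have ha : c - m₁ ≤ c - m₂ := by linarith
  have hsplit : gaussianReal 0 v (Ici (c - m₁))
      = gaussianReal 0 v (Ico (c - m₁) (c - m₂)) + gaussianReal 0 v (Ici (c - m₂)) := by
    rw [← measure_union ((Iio_disjoint_Ici le_rfl).mono_left Ico_subset_Iio_self)
      measurableSet_Ici, Ico_union_Ici_eq_Ici ha]
  rw [hsplit, ENNReal.toReal_add (measure_ne_top _ _) (measure_ne_top _ _)]
  rw [add_sub_assoc, sub_self, add_zero]
  have hcoe : ((v : ℝ≥0) : ℝ) = σ ^ 2 := rfl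
  have hsq : Real.sqrt (2 * Real.pi * (v : ℝ)) = σ * Real.sqrt (2 * Real.pi) := by
    rw [hcoe, Real.sqrt_mul (by positivity), Real.sqrt_sq hσ.le, mul_comm]
  have hdenom : (0:ℝ) < σ * Real.sqrt (2 * Real.pi) := by positivity
  rw [gaussianReal_apply_eq_integral 0 hv0,
    ENNReal.toReal_ofReal (setIntegral_nonneg measurableSet_Ico
      (fun x _ => gaussianPDFReal_nonneg 0 v x))]
  have hle : ∫ x in Ico (c - m₁) (c - m₂), gaussianPDFReal 0 v x
      ≤ ∫ _x in Ico (c - m₁) (c - m₂), (σ * Real.sqrt (2 * Real.pi))⁻¹ := by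
    refine setIntegral_mono_on ((integrable_gaussianPDFReal 0 v).integrableOn)
      (integrableOn_const measure_Ico_lt_top.ne) measurableSet_Ico ?_
    intro x _
    unfold gaussianPDFReal
    rw [hsq]
    calc (σ * Real.sqrt (2 * Real.pi))⁻¹ * rexp (-(x - 0) ^ 2 / (2 * (v:ℝ)))
        ≤ (σ * Real.sqrt (2 * Real.pi))⁻¹ * 1 := by
          gcongr
          exact Real.exp_le_one_iff.2 (by
            rw [hcoe]
            apply div_nonpos_of_nonpos_of_nonneg <;> [skip; positivity]
            simpa using sq_nonneg (x - 0))
      _ = (σ * Real.sqrt (2 * Real.pi))⁻¹ := mul_one _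
  refine hle.trans ?_
  rw [setIntegral_const, Real.volume_real_Ico, smul_eq_mul,
    max_eq_left (by linarith : (0:ℝ) ≤ (c - m₂) - (c - m₁))]
  have heq : c - m₂ - (c - m₁) = m₁ - m₂ := by ring
  rw [heq, div_eq_mul_inv]

private lemma gauss_one_side (σ : ℝ) (hσ : 0 < σ) (m₁ m₂ : ℝ) (h : m₂ ≤ m₁)
    (A : Set ℝ) (hA : MeasurableSet A) :
    (gaussianReal m₁ ⟨σ ^ 2, sq_nonneg σ⟩ A).toReal
      - (gaussianReal m₂ ⟨σ ^ 2, sq_nonneg σ⟩ A).toReal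
      ≤ (m₁ - m₂) / (σ * Real.sqrt (2 * Real.pi)) := by
  set v : ℝ≥0 := ⟨σ ^ 2, sq_nonneg σ⟩ with hv
  have hv0 : v ≠ 0 := by
    intro h0
    have h2 : σ ^ 2 = 0 := congrArg NNReal.toReal h0
    exact (pow_ne_zero 2 hσ.ne') h2
  have hcoe : ((v : ℝ≥0) : ℝ) = σ ^ 2 := rfl
  set c : ℝ := (m₁ + m₂) / 2 with hc
  set f₁ : ℝ → ℝ := gaussianPDFReal m₁ v with hf₁
  set f₂ : ℝ → ℝ := gaussianPDFReal m₂ v with hf₂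
  have hint₁ : Integrable f₁ := integrable_gaussianPDFReal m₁ v
  have hint₂ : Integrable f₂ := integrable_gaussianPDFReal m₂ v
  have hintg : Integrable (fun x => f₁ x - f₂ x) := hint₁.sub hint₂
  have happly : ∀ (m : ℝ) (s : Set ℝ), (gaussianReal m v s).toReal
      = ∫ x in s, gaussianPDFReal m v x := by
    intro m s
    rw [gaussianReal_apply_eq_integral m hv0 s, ENNReal.toReal_ofReal]
    exact integral_nonneg fun x => gaussianPDFReal_nonneg m v x
  rw [happly, happly, ← integral_sub hint₁.integrableOn hint₂.integrableOn]
  -- sign facts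
  have hsign₁ : ∀ x ∈ Ici c, 0 ≤ f₁ x - f₂ x := by
    intro x hx
    rw [sub_nonneg, hf₁, hf₂]
    unfold gaussianPDFReal
    apply mul_le_mul_of_nonneg_left _ (by positivity)
    apply Real.exp_le_exp.2
    rw [div_le_div_iff_of_pos_right (by rw [hcoe]; positivity)]
    have hx' : c ≤ x := hx
    nlinarith [hx']
  have hsign₂ : ∀ x ∈ A \ Ici c, f₁ x - f₂ x ≤ 0 := by
    intro x hx
    rw [sub_nonpos, hf₁, hf₂]
    unfold gaussianPDFReal
    apply mul_le_mul_of_nonneg_left _ (by positivity)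
    apply Real.exp_le_exp.2
    rw [div_le_div_iff_of_pos_right (by rw [hcoe]; positivity)]
    have hx' : x < c := by simpa using hx.2
    nlinarith [hx'.le]
  have hstep : ∫ x in A, (f₁ x - f₂ x) ≤ ∫ x in Ici c, (f₁ x - f₂ x) := by
    rw [← integral_inter_add_diff measurableSet_Ici hintg.integrableOn]
    have h1 : ∫ x in A \ Ici c, (f₁ x - f₂ x) ≤ 0 :=
      setIntegral_nonpos (hA.diff measurableSet_Ici) hsign₂
    have h2 : ∫ x in A ∩ Ici c, (f₁ x - f₂ x) ≤ ∫ x in Ici c, (f₁ x - f₂ x) :=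
      setIntegral_mono_set hintg.integrableOn
        (ae_restrict_of_forall_mem measurableSet_Ici hsign₁)
        (HasSubset.Subset.eventuallyLE Set.inter_subset_right)
    linarith
  refine hstep.trans ?_
  rw [integral_sub hint₁.integrableOn hint₂.integrableOn, ← happly, ← happly]
  exact gauss_tail σ hσ m₁ m₂ h

private lemma gauss_tv_ordered (σ : ℝ) (hσ : 0 < σ) (m₁ m₂ : ℝ) (h : m₂ ≤ m₁) :
    tvDist (gaussianReal m₁ ⟨σ ^ 2, sq_nonneg σ⟩) (gaussianReal m₂ ⟨σ ^ 2, sq_nonneg σ⟩)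
      ≤ (m₁ - m₂) / (σ * Real.sqrt (2 * Real.pi)) := by
  have hb : (0:ℝ) ≤ (m₁ - m₂) / (σ * Real.sqrt (2 * Real.pi)) := by
    apply div_nonneg (by linarith) (by positivity)
  refine Real.iSup_le (fun A => ?_) hb
  rw [abs_sub_le_iff]
  constructor
  · exact gauss_one_side σ hσ m₁ m₂ h A.1 A.2
  · have key : ∀ m : ℝ, (gaussianReal m ⟨σ ^ 2, sq_nonneg σ⟩ A.1ᶜ).toReal
        = 1 - (gaussianReal m ⟨σ ^ 2, sq_nonneg σ⟩ A.1).toReal := by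
      intro m
      haveI := instIsProbabilityMeasureGaussianReal m ⟨σ ^ 2, sq_nonneg σ⟩
      rw [prob_compl_eq_one_sub (μ := gaussianReal m ⟨σ ^ 2, sq_nonneg σ⟩) A.2,
        ENNReal.toReal_sub_of_le (prob_le_one (μ := gaussianReal m ⟨σ ^ 2, sq_nonneg σ⟩))
          ENNReal.one_ne_top,
        ENNReal.toReal_one]
    have := gauss_one_side σ hσ m₁ m₂ h A.1ᶜ A.2.compl
    rw [key, key] at this
    linarith

private lemma tvDist_comm {𝒳 : Type*} [MeasurableSpace 𝒳] (P Q : Measure 𝒳) :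
    tvDist P Q = tvDist Q P :=
  iSup_congr fun A => abs_sub_comm _ _


/-- **Gaussian policies with Lipschitz mean are total-variation continuous with a linear
modulus.** For Gaussians of common variance `σ²`,
`TV(N(m₁,σ²), N(m₂,σ²)) ≤ |m₁ − m₂|/(σ√(2π))`; consequently, for an `L`-Lipschitz mean map
`μ : X → ℝ`, `TV(N(μ x, σ²), N(μ x′, σ²)) ≤ L‖x − x′‖/(σ√2)`. -/
theorem gaussian_tv_lipschitz_mean
    (σ : ℝ) (hσ : 0 < σ) :
    (∀ m₁ m₂ : ℝ,
      tvDist (gaussianReal m₁ ⟨σ ^ 2, sq_nonneg σ⟩) (gaussianReal m₂ ⟨σ ^ 2, sq_nonneg σ⟩)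
        ≤ |m₁ - m₂| / (σ * Real.sqrt (2 * Real.pi))) ∧
    (∀ (X : Type*) [NormedAddCommGroup X] [NormedSpace ℝ X]
      (L : ℝ) (μ : X → ℝ), (∀ x x' : X, |μ x - μ x'| ≤ L * ‖x - x'‖) →
      ∀ x x' : X,
        tvDist (gaussianReal (μ x) ⟨σ ^ 2, sq_nonneg σ⟩)
            (gaussianReal (μ x') ⟨σ ^ 2, sq_nonneg σ⟩)
          ≤ L * ‖x - x'‖ / (σ * Real.sqrt 2)) := by
  have part1 : ∀ m₁ m₂ : ℝ,
      tvDist (gaussianReal m₁ ⟨σ ^ 2, sq_nonneg σ⟩) (gaussianReal m₂ ⟨σ ^ 2, sq_nonneg σ⟩)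
        ≤ |m₁ - m₂| / (σ * Real.sqrt (2 * Real.pi)) := by
    intro m₁ m₂
    rcases le_total m₂ m₁ with h | h
    · rw [abs_of_nonneg (by linarith)]
      exact gauss_tv_ordered σ hσ m₁ m₂ h
    · rw [tvDist_comm, abs_sub_comm, abs_of_nonneg (by linarith)]
      exact gauss_tv_ordered σ hσ m₂ m₁ h
  refine ⟨part1, ?_⟩
  intro X _ _ L μ hL x x'
  refine (part1 (μ x) (μ x')).trans ?_
  have hden : (0:ℝ) < σ * Real.sqrt 2 := by positivity
  have hLn : (0:ℝ) ≤ L * ‖x - x'‖ := (abs_nonneg _).trans (hL x x')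
  have hsqrt : σ * Real.sqrt 2 ≤ σ * Real.sqrt (2 * Real.pi) := by
    apply mul_le_mul_of_nonneg_left _ hσ.le
    apply Real.sqrt_le_sqrt
    nlinarith [Real.pi_gt_three]
  exact div_le_div₀ hLn (hL x x') hden hsqrt
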